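/- arXiv:2605.24422 — 3 statements merged into one kernel-verified Lean document; each statement's English description precedes it below -/
import Mathlib

section
/- Let X be a real random variable supported in [a,b] with CDF F, let j ≥ 2 be an integer, and let x, y ∈ [a,b]. Then Cov( (x − X)₊^{j-1}/(j-1)!, (y − X)₊^{j-1}/(j-1)! ) = (1/((j-2)!)²) ∫_a^x ∫_a^y (x − t)^{j-2} (y − s)^{j-2} ( F(min(t,s)) − F(t)·F(s) ) ds dt. (This identity gives the variance V_j^A(x) for x = y and the covariance kernel of the correlation function r^A(x,y) of the limiting Gaussian process in Theorem 3.1.) -/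
open MeasureTheory intervalIntegral

lemma ASD.intervalIntegrable_of_bdd {f : ℝ → ℝ} {a b : ℝ} (hm : Measurable f) {C : ℝ}
    (h : ∀ t ∈ Set.uIcc a b, |f t| ≤ C) : IntervalIntegrable f volume a b := by
  rw [intervalIntegrable_iff]
  haveI : IsFiniteMeasure (volume.restrict (Set.uIoc a b)) :=
    ⟨by rw [Measure.restrict_apply_univ, Set.uIoc]; exact measure_Ioc_lt_top⟩
  refine ⟨hm.aestronglyMeasurable.restrict, HasFiniteIntegral.of_bounded (C := C) ?_⟩
  exact (ae_restrict_iff' measurableSet_uIoc).2 (Filter.Eventually.of_forall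
    (fun t ht => h t (Set.uIoc_subset_uIcc ht)))

lemma ASD.integrable_bdd {α : Type*} [MeasurableSpace α] {ν : Measure α} [IsFiniteMeasure ν]
    {f : α → ℝ} (hm : AEStronglyMeasurable f ν) {C : ℝ} (h : ∀ᵐ z ∂ν, |f z| ≤ C) :
    Integrable f ν :=
  ⟨hm, HasFiniteIntegral.of_bounded (C := C) (by simpa [Real.norm_eq_abs] using h)⟩

lemma ASD.bnd (k : ℕ) {a x t r : ℝ} (ht : t ∈ Set.Ioc a x) (hr : |r| ≤ 1) :
    |(x - t) ^ k * r| ≤ (x - a) ^ k := by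
  have h1 : 0 ≤ x - t := by linarith [ht.2]
  have h2 : x - t ≤ x - a := by linarith [ht.1]
  have h3 : 0 ≤ x - a := le_trans h1 h2
  calc |(x - t) ^ k * r| = |(x - t) ^ k| * |r| := abs_mul _ _
    _ ≤ (x - a) ^ k * 1 := by
        refine mul_le_mul ?_ hr (abs_nonneg r) (by positivity)
        rw [abs_of_nonneg (by positivity)]
        exact pow_le_pow_left₀ h1 h2 k
    _ = (x - a) ^ k := mul_one _

lemma ASD.bnd2 (k : ℕ) {a x y t s r c : ℝ} (ht : t ∈ Set.Ioc a x) (hs : s ∈ Set.Ioc a y)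
    (hr : |r| ≤ c) : |(x - t) ^ k * (y - s) ^ k * r| ≤ (x - a) ^ k * (y - a) ^ k * c := by
  have h1 : |(x - t) ^ k * 1| ≤ (x - a) ^ k := ASD.bnd k ht (by norm_num)
  have h2 : |(y - s) ^ k * 1| ≤ (y - a) ^ k := ASD.bnd k hs (by norm_num)
  rw [mul_one] at h1 h2
  have hc : 0 ≤ c := le_trans (abs_nonneg r) hr
  calc |(x - t) ^ k * (y - s) ^ k * r| = |(x - t) ^ k| * |(y - s) ^ k| * |r| := by
        rw [abs_mul, abs_mul]
    _ ≤ (x - a) ^ k * (y - a) ^ k * c := by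
        refine mul_le_mul (mul_le_mul h1 h2 (abs_nonneg _) ?_) hr (abs_nonneg r) ?_
        · exact le_trans (abs_nonneg _) h1
        · exact mul_nonneg (le_trans (abs_nonneg _) h1) (le_trans (abs_nonneg _) h2)

lemma ASD.bndH (k : ℕ) {a x y t s r1 r2 : ℝ} (ht : t ∈ Set.Ioc a x) (hs : s ∈ Set.Ioc a y)
    (h1 : |r1| ≤ 1) (h2 : |r2| ≤ 1) :
    |((x - t) ^ k * r1) * ((y - s) ^ k * r2)| ≤ (x - a) ^ k * (y - a) ^ k := by
  have hb1 := ASD.bnd k ht h1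
  have hb2 := ASD.bnd k hs h2
  rw [abs_mul]
  exact mul_le_mul hb1 hb2 (abs_nonneg _) (le_trans (abs_nonneg _) hb1)

lemma ASD.rep (k : ℕ) (a x c : ℝ) (hac : a ≤ c) (hax : a ≤ x) :
    (∫ t in a..x, (x - t) ^ k * (if c ≤ t then (1:ℝ) else 0))
      = max (x - c) 0 ^ (k + 1) / (k + 1) := by
  rw [integral_of_le hax]
  rcases le_or_gt c x with hcx | hcx
  · have hset : (Set.Ioc a x ∩ Set.Ici c : Set ℝ) =ᵐ[volume] (Set.Ioc c x : Set ℝ) := by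
      rw [MeasureTheory.ae_eq_set]
      constructor
      · refine measure_mono_null (fun t ht => ?_) (Real.volume_singleton (a := c))
        simp only [Set.mem_diff, Set.mem_inter_iff, Set.mem_Ioc, Set.mem_Ici,
          Set.mem_singleton_iff] at *
        rcases ht with ⟨⟨⟨_, h2⟩, h3⟩, h4⟩
        by_contra hne
        exact h4 ⟨lt_of_le_of_ne h3 (Ne.symm hne), h2⟩
      · have hemp : Set.Ioc c x \ (Set.Ioc a x ∩ Set.Ici c) = ∅ := by
          ext t
          constructor
          · rintro ⟨⟨h1, h2⟩, h3⟩
            exact h3 ⟨⟨lt_of_le_of_lt hac h1, h2⟩, le_of_lt h1⟩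
          · exact fun h => h.elim
        rw [hemp]
        exact measure_empty
    have : (∫ t in Set.Ioc a x, (x - t) ^ k * (if c ≤ t then (1:ℝ) else 0))
        = ∫ t in Set.Ioc a x ∩ Set.Ici c, (x - t) ^ k := by
      rw [← MeasureTheory.integral_indicator (measurableSet_Ioc.inter measurableSet_Ici),
        ← MeasureTheory.integral_indicator measurableSet_Ioc]
      congr 1
      ext t
      rw [Set.indicator_apply, Set.indicator_apply]
      by_cases ht : t ∈ Set.Ioc a x <;> by_cases htc : c ≤ t <;>
        simp [ht, htc, Set.mem_inter_iff, Set.mem_Ici]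
    rw [this, setIntegral_congr_set hset, ← integral_of_le hcx,
      integral_comp_sub_left (fun u => u ^ k) x, integral_pow]
    have hmax : max (x - c) 0 = x - c := max_eq_left (by linarith)
    simp [hmax]
  · have : (∫ t in Set.Ioc a x, (x - t) ^ k * (if c ≤ t then (1:ℝ) else 0))
        = ∫ _t in Set.Ioc a x, (0:ℝ) := by
      refine setIntegral_congr_fun measurableSet_Ioc (fun t ht => ?_)
      have : ¬ c ≤ t := by rcases ht with ⟨_, h2⟩; linarith
      simp [this]
    rw [this]
    have hmax : max (x - c) 0 = 0 := max_eq_right (by linarith)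
    simp [hmax]

lemma ASD.rep' (k : ℕ) {a z c : ℝ} (hac : a ≤ c) (haz : a ≤ z) :
    max (z - c) 0 ^ (k + 1) / ((k + 1).factorial : ℝ)
      = (1 / (k.factorial : ℝ)) * ∫ t in a..z, (z - t) ^ k * (if c ≤ t then (1:ℝ) else 0) := by
  rw [ASD.rep k a z c hac haz]
  have hfac : (((k + 1).factorial : ℕ) : ℝ) = ((k : ℝ) + 1) * (k.factorial : ℝ) := by
    rw [Nat.factorial_succ]; push_cast; ring
  rw [hfac, ← div_div, one_div, inv_mul_eq_div]

lemma ASD.ind_int {Ω : Type*} [MeasurableSpace Ω] (μ : Measure Ω) [IsProbabilityMeasure μ]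
    {X : Ω → ℝ} (hX : Measurable X) (F : ℝ → ℝ)
    (hF : ∀ t, F t = (μ {ω | X ω ≤ t}).toReal) (m : ℝ) :
    ∫ ω, (if X ω ≤ m then (1:ℝ) else 0) ∂μ = F m := by
  rw [hF]
  have hs : MeasurableSet {ω | X ω ≤ m} := hX measurableSet_Iic
  rw [← measureReal_def, ← MeasureTheory.integral_indicator_one hs]
  refine integral_congr_ae (Filter.Eventually.of_forall fun ω => ?_)
  by_cases h : X ω ≤ m <;> simp [Set.indicator_apply, Set.mem_setOf_eq, h]

lemma ASD.EA {Ω : Type*} [MeasurableSpace Ω] (μ : Measure Ω) [IsProbabilityMeasure μ]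
    {a : ℝ} {X : Ω → ℝ} (hX : Measurable X) (hsupp : ∀ᵐ ω ∂μ, a ≤ X ω)
    (F : ℝ → ℝ) (hF : ∀ t, F t = (μ {ω | X ω ≤ t}).toReal)
    (k : ℕ) {z : ℝ} (haz : a ≤ z) :
    ∫ ω, max (z - X ω) 0 ^ (k + 1) / (((k + 1).factorial : ℕ) : ℝ) ∂μ
      = (1 / (k.factorial : ℝ)) * ∫ t in Set.Ioc a z, (z - t) ^ k * F t := by
  haveI : IsFiniteMeasure (volume.restrict (Set.Ioc a z)) :=
    ⟨by rw [Measure.restrict_apply_univ]; exact measure_Ioc_lt_top⟩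
  have h1 : ∫ ω, max (z - X ω) 0 ^ (k + 1) / (((k + 1).factorial : ℕ) : ℝ) ∂μ
      = ∫ ω, ((1 / (k.factorial : ℝ))
          * ∫ t in Set.Ioc a z, (z - t) ^ k * (if X ω ≤ t then (1:ℝ) else 0)) ∂μ := by
    refine integral_congr_ae (hsupp.mono fun ω hω => ?_)
    dsimp only
    rw [ASD.rep' k hω haz, integral_of_le haz]
  rw [h1, MeasureTheory.integral_const_mul]
  congr 1
  have hint : Integrable
      (Function.uncurry fun ω t => (z - t) ^ k * (if X ω ≤ t then (1:ℝ) else 0))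
      (μ.prod (volume.restrict (Set.Ioc a z))) := by
    refine ASD.integrable_bdd ?_ (C := (z - a) ^ k) ?_
    · refine Measurable.aestronglyMeasurable (Measurable.mul ?_ ?_)
      · exact (measurable_const.sub measurable_snd).pow measurable_const
      · exact Measurable.ite
          (measurableSet_le (hX.comp measurable_fst) measurable_snd)
          measurable_const measurable_const
    · have hprod : μ.prod (volume.restrict (Set.Ioc a z))
          = (μ.prod volume).restrict (Set.univ ×ˢ Set.Ioc a z) := by
        rw [← Measure.prod_restrict, Measure.restrict_univ]
      rw [hprod]
      refine (ae_restrict_iff' (MeasurableSet.univ.prod measurableSet_Ioc)).2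
        (Filter.Eventually.of_forall fun p hp => ?_)
      refine ASD.bnd k hp.2 ?_
      split_ifs <;> simp
  rw [MeasureTheory.integral_integral_swap hint]
  refine integral_congr_ae (Filter.Eventually.of_forall fun t => ?_)
  dsimp only
  rw [MeasureTheory.integral_const_mul, ASD.ind_int μ hX F hF t]

lemma ASD.EAB {Ω : Type*} [MeasurableSpace Ω] (μ : Measure Ω) [IsProbabilityMeasure μ]
    {a : ℝ} {X : Ω → ℝ} (hX : Measurable X) (hsupp : ∀ᵐ ω ∂μ, a ≤ X ω)
    (F : ℝ → ℝ) (hF : ∀ t, F t = (μ {ω | X ω ≤ t}).toReal)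
    (k : ℕ) {x y : ℝ} (hax : a ≤ x) (hay : a ≤ y) :
    ∫ ω, (max (x - X ω) 0 ^ (k + 1) / (((k + 1).factorial : ℕ) : ℝ))
        * (max (y - X ω) 0 ^ (k + 1) / (((k + 1).factorial : ℕ) : ℝ)) ∂μ
      = (1 / (k.factorial : ℝ)) ^ 2
          * ∫ p, (x - p.1) ^ k * (y - p.2) ^ k * F (min p.1 p.2)
              ∂((volume.restrict (Set.Ioc a x)).prod (volume.restrict (Set.Ioc a y))) := by
  haveI hfx : IsFiniteMeasure (volume.restrict (Set.Ioc a x)) :=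
    ⟨by rw [Measure.restrict_apply_univ]; exact measure_Ioc_lt_top⟩
  haveI hfy : IsFiniteMeasure (volume.restrict (Set.Ioc a y)) :=
    ⟨by rw [Measure.restrict_apply_univ]; exact measure_Ioc_lt_top⟩
  set νx := volume.restrict (Set.Ioc a x) with hνx
  set νy := volume.restrict (Set.Ioc a y) with hνy
  have h1 : ∫ ω, (max (x - X ω) 0 ^ (k + 1) / (((k + 1).factorial : ℕ) : ℝ))
        * (max (y - X ω) 0 ^ (k + 1) / (((k + 1).factorial : ℕ) : ℝ)) ∂μ
      = ∫ ω, ((1 / (k.factorial : ℝ)) ^ 2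
          * ∫ p, ((x - p.1) ^ k * (if X ω ≤ p.1 then (1:ℝ) else 0))
              * ((y - p.2) ^ k * (if X ω ≤ p.2 then (1:ℝ) else 0)) ∂(νx.prod νy)) ∂μ := by
    refine integral_congr_ae (hsupp.mono fun ω hω => ?_)
    dsimp only
    rw [ASD.rep' k hω hax, ASD.rep' k hω hay, integral_of_le hax, integral_of_le hay,
      MeasureTheory.integral_prod_mul
        (μ := νx) (ν := νy)
        (f := fun t => (x - t) ^ k * (if X ω ≤ t then (1:ℝ) else 0))
        (g := fun s => (y - s) ^ k * (if X ω ≤ s then (1:ℝ) else 0))]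
    ring
  rw [h1, MeasureTheory.integral_const_mul]
  congr 1
  have hint : Integrable
      (Function.uncurry fun ω (p : ℝ × ℝ) =>
        ((x - p.1) ^ k * (if X ω ≤ p.1 then (1:ℝ) else 0))
          * ((y - p.2) ^ k * (if X ω ≤ p.2 then (1:ℝ) else 0)))
      (μ.prod (νx.prod νy)) := by
    refine ASD.integrable_bdd ?_ (C := (x - a) ^ k * (y - a) ^ k) ?_
    · refine Measurable.aestronglyMeasurable (Measurable.mul (Measurable.mul ?_ ?_)
        (Measurable.mul ?_ ?_))
      · exact (measurable_const.sub (measurable_fst.comp measurable_snd)).pow measurable_const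
      · exact Measurable.ite
          (measurableSet_le (hX.comp measurable_fst) (measurable_fst.comp measurable_snd))
          measurable_const measurable_const
      · exact (measurable_const.sub (measurable_snd.comp measurable_snd)).pow measurable_const
      · exact Measurable.ite
          (measurableSet_le (hX.comp measurable_fst) (measurable_snd.comp measurable_snd))
          measurable_const measurable_const
    · have hprod : μ.prod (νx.prod νy)
          = (μ.prod (volume.prod volume)).restrict
              (Set.univ ×ˢ (Set.Ioc a x ×ˢ Set.Ioc a y)) := by
        calc μ.prod (νx.prod νy)
            = (μ.restrict Set.univ).prod
                ((volume.prod volume).restrict (Set.Ioc a x ×ˢ Set.Ioc a y)) := by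
              rw [hνx, hνy, Measure.prod_restrict, Measure.restrict_univ]
          _ = (μ.prod (volume.prod volume)).restrict
                (Set.univ ×ˢ (Set.Ioc a x ×ˢ Set.Ioc a y)) := Measure.prod_restrict _ _
      rw [hprod]
      refine (ae_restrict_iff' (MeasurableSet.univ.prod
        (measurableSet_Ioc.prod measurableSet_Ioc))).2
        (Filter.Eventually.of_forall fun q hq => ?_)
      refine ASD.bndH k hq.2.1 hq.2.2 ?_ ?_ <;> (split_ifs <;> norm_num)
  rw [MeasureTheory.integral_integral_swap hint]
  refine integral_congr_ae (Filter.Eventually.of_forall fun p => ?_)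
  dsimp only
  have hpt : ∀ ω, ((x - p.1) ^ k * (if X ω ≤ p.1 then (1:ℝ) else 0))
        * ((y - p.2) ^ k * (if X ω ≤ p.2 then (1:ℝ) else 0))
      = ((x - p.1) ^ k * (y - p.2) ^ k) * (if X ω ≤ min p.1 p.2 then (1:ℝ) else 0) := by
    intro ω
    by_cases h1 : X ω ≤ p.1 <;> by_cases h2 : X ω ≤ p.2 <;>
      simp [h1, h2, le_min_iff]
  simp_rw [hpt]
  rw [MeasureTheory.integral_const_mul, ASD.ind_int μ hX F hF (min p.1 p.2), mul_assoc]

/-- Covariance kernel of the higher-order ASD test statistic: for `j ≥ 2`,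
`Cov((x−X)₊^{j-1}/(j-1)!, (y−X)₊^{j-1}/(j-1)!)
  = (1/((j-2)!)²) ∫_a^x ∫_a^y (x−t)^{j-2}(y−s)^{j-2}(F(min(t,s)) − F(t)F(s)) ds dt`,
where the covariance is written as `E[AB] − E[A]·E[B]`. -/
theorem covariance_kernel_higher_order_ASD
    {Ω : Type*} [MeasurableSpace Ω] (μ : Measure Ω) [IsProbabilityMeasure μ]
    (a b : ℝ) (X : Ω → ℝ) (hX : Measurable X)
    (hsupp : ∀ᵐ ω ∂μ, X ω ∈ Set.Icc a b)
    (F : ℝ → ℝ) (hF : ∀ t, F t = (μ {ω | X ω ≤ t}).toReal)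
    (j : ℕ) (hj : 2 ≤ j) (x y : ℝ) (hx : x ∈ Set.Icc a b) (hy : y ∈ Set.Icc a b) :
    (∫ ω, (max (x - X ω) 0 ^ (j - 1) / (Nat.factorial (j - 1) : ℝ))
        * (max (y - X ω) 0 ^ (j - 1) / (Nat.factorial (j - 1) : ℝ)) ∂μ)
      - (∫ ω, max (x - X ω) 0 ^ (j - 1) / (Nat.factorial (j - 1) : ℝ) ∂μ)
        * (∫ ω, max (y - X ω) 0 ^ (j - 1) / (Nat.factorial (j - 1) : ℝ) ∂μ)
      = (1 / (Nat.factorial (j - 2) : ℝ) ^ 2)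
          * ∫ t in a..x, ∫ s in a..y,
              (x - t) ^ (j - 2) * (y - s) ^ (j - 2) * (F (min t s) - F t * F s) := by
  obtain ⟨k, rfl⟩ : ∃ k, j = k + 2 := ⟨j - 2, by omega⟩
  simp only [show k + 2 - 1 = k + 1 from rfl, show k + 2 - 2 = k from rfl]
  have hax : a ≤ x := hx.1
  have hay : a ≤ y := hy.1
  have hsupp' : ∀ᵐ ω ∂μ, a ≤ X ω := hsupp.mono fun ω h => h.1
  haveI hfx : IsFiniteMeasure (volume.restrict (Set.Ioc a x)) :=
    ⟨by rw [Measure.restrict_apply_univ]; exact measure_Ioc_lt_top⟩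
  haveI hfy : IsFiniteMeasure (volume.restrict (Set.Ioc a y)) :=
    ⟨by rw [Measure.restrict_apply_univ]; exact measure_Ioc_lt_top⟩
  set νx := volume.restrict (Set.Ioc a x) with hνx
  set νy := volume.restrict (Set.Ioc a y) with hνy
  -- F is monotone, measurable and bounded
  have hFmono : Monotone F := fun u v huv => by
    rw [hF u, hF v]
    exact ENNReal.toReal_mono (measure_ne_top μ _)
      (measure_mono fun ω h => le_trans h huv)
  have hFmeas : Measurable F := hFmono.measurable
  have hFbd : ∀ t, |F t| ≤ 1 := fun t => by
    rw [hF t, abs_of_nonneg ENNReal.toReal_nonneg]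
    calc ((μ {ω | X ω ≤ t}).toReal) ≤ ((1 : ENNReal)).toReal :=
          ENNReal.toReal_mono ENNReal.one_ne_top prob_le_one
      _ = 1 := by simp
  -- integrability of the three kernels on νx.prod νy
  have hprodeq : νx.prod νy = (volume.prod volume).restrict (Set.Ioc a x ×ˢ Set.Ioc a y) := by
    rw [hνx, hνy, Measure.prod_restrict]
  have hbound : ∀ {G : ℝ × ℝ → ℝ}, Measurable G → (∀ p, |G p| ≤ 2) →
      Integrable (fun p : ℝ × ℝ => (x - p.1) ^ k * (y - p.2) ^ k * G p) (νx.prod νy) := by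
    intro G hmG hbG
    refine ASD.integrable_bdd ?_ (C := (x - a) ^ k * (y - a) ^ k * 2) ?_
    · refine Measurable.aestronglyMeasurable (Measurable.mul (Measurable.mul ?_ ?_) hmG)
      · exact (measurable_const.sub measurable_fst).pow measurable_const
      · exact (measurable_const.sub measurable_snd).pow measurable_const
    · rw [hprodeq]
      refine (ae_restrict_iff' (measurableSet_Ioc.prod measurableSet_Ioc)).2
        (Filter.Eventually.of_forall fun p hp => ?_)
      exact ASD.bnd2 k hp.1 hp.2 (hbG p)
  have hK1 : Integrable (fun p : ℝ × ℝ => (x - p.1) ^ k * (y - p.2) ^ k * F (min p.1 p.2))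
      (νx.prod νy) :=
    hbound (hFmeas.comp (measurable_fst.min measurable_snd))
      (fun p => le_trans (hFbd _) one_le_two)
  have hK2 : Integrable (fun p : ℝ × ℝ => (x - p.1) ^ k * (y - p.2) ^ k * (F p.1 * F p.2))
      (νx.prod νy) := by
    refine hbound ((hFmeas.comp measurable_fst).mul (hFmeas.comp measurable_snd)) fun p => ?_
    calc |F p.1 * F p.2| = |F p.1| * |F p.2| := abs_mul _ _
      _ ≤ 1 * 1 := mul_le_mul (hFbd _) (hFbd _) (abs_nonneg _) zero_le_one
      _ ≤ 2 := by norm_num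
  have hG : Integrable (fun p : ℝ × ℝ =>
      (x - p.1) ^ k * (y - p.2) ^ k * (F (min p.1 p.2) - F p.1 * F p.2)) (νx.prod νy) := by
    refine hbound ((hFmeas.comp (measurable_fst.min measurable_snd)).sub
      ((hFmeas.comp measurable_fst).mul (hFmeas.comp measurable_snd))) fun p => ?_
    calc |F (min p.1 p.2) - F p.1 * F p.2| ≤ |F (min p.1 p.2)| + |F p.1 * F p.2| :=
          abs_sub _ _
      _ ≤ 1 + 1 := by
          refine add_le_add (hFbd _) ?_
          calc |F p.1 * F p.2| = |F p.1| * |F p.2| := abs_mul _ _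
            _ ≤ 1 * 1 := mul_le_mul (hFbd _) (hFbd _) (abs_nonneg _) zero_le_one
            _ = 1 := one_mul _
      _ = 2 := by norm_num
  -- rewrite LHS
  rw [ASD.EAB μ hX hsupp' F hF k hax hay, ASD.EA μ hX hsupp' F hF k hax,
    ASD.EA μ hX hsupp' F hF k hay]
  -- rewrite the product of expectations as a product-measure integral
  have h2 : ((1 / (k.factorial : ℝ)) * ∫ t in Set.Ioc a x, (x - t) ^ k * F t)
        * ((1 / (k.factorial : ℝ)) * ∫ s in Set.Ioc a y, (y - s) ^ k * F s)
      = (1 / (k.factorial : ℝ)) ^ 2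
          * ∫ p, ((x - p.1) ^ k * F p.1) * ((y - p.2) ^ k * F p.2) ∂(νx.prod νy) := by
    rw [MeasureTheory.integral_prod_mul (μ := νx) (ν := νy)
      (f := fun t => (x - t) ^ k * F t) (g := fun s => (y - s) ^ k * F s)]
    ring
  rw [h2]
  -- rewrite RHS iterated interval integral as product-measure integral
  have h3 : (∫ t in a..x, ∫ s in a..y,
        (x - t) ^ k * (y - s) ^ k * (F (min t s) - F t * F s))
      = ∫ p, (x - p.1) ^ k * (y - p.2) ^ k * (F (min p.1 p.2) - F p.1 * F p.2)
          ∂(νx.prod νy) := by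
    rw [integral_of_le hax]
    simp_rw [integral_of_le hay]
    exact (MeasureTheory.integral_prod _ hG).symm
  rw [h3]
  have hK2' : Integrable (fun p : ℝ × ℝ =>
      ((x - p.1) ^ k * F p.1) * ((y - p.2) ^ k * F p.2)) (νx.prod νy) := by
    refine hK2.congr (Filter.Eventually.of_forall fun p => ?_)
    ring
  rw [← mul_sub, ← MeasureTheory.integral_sub hK1 hK2']
  have h4 : (1 / ((k.factorial : ℝ)) ^ 2) = (1 / (k.factorial : ℝ)) ^ 2 := by
    rw [div_pow, one_pow]
  rw [h4]
  congr 1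
  refine integral_congr_ae (Filter.Eventually.of_forall fun p => ?_)
  ring
end

section
/- Let X and Y be random variables supported in [a,b] with CDFs F and G. If F_2^A(x) ≤ G_2^A(x) for all x ∈ [a,b], where F_2^A(x) = ∫_a^x F(t) dt and G_2^A(x) = ∫_a^x G(t) dt (second-order ascending stochastic dominance of X over Y), then E[u(X)] ≥ E[u(Y)] for every nondecreasing concave function u : ℝ → ℝ. (Second-order ASD implies that every risk-averse investor attains higher expected utility from the dominant asset.) -/
open MeasureTheory intervalIntegral
open scoped ENNReal

open MeasureTheory intervalIntegral

namespace SASDaux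

/-- Right derivative of a concave function. -/
noncomputable def rd (u : ℝ → ℝ) (t : ℝ) : ℝ := sSup (slope u t '' Set.Ioi t)

variable {u : ℝ → ℝ}

lemma mem_diff_univ {t y : ℝ} (h : y ≠ t) : y ∈ (Set.univ \ {t} : Set ℝ) := ⟨trivial, h⟩

lemma bddAbove_slope (hu : ConcaveOn ℝ Set.univ u) (t : ℝ) :
    BddAbove (slope u t '' Set.Ioi t) := by
  refine ⟨slope u t (t - 1), ?_⟩
  rintro v ⟨y, hy, rfl⟩
  have hy' : t < y := hy
  exact (hu.slope_anti (Set.mem_univ t)) (mem_diff_univ (by linarith))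
    (mem_diff_univ (ne_of_gt hy')) (by linarith)

lemma nonempty_slope (t : ℝ) : (slope u t '' Set.Ioi t).Nonempty :=
  ⟨slope u t (t + 1), Set.mem_image_of_mem _ (by simp : t + 1 ∈ Set.Ioi t)⟩

lemma hasDerivWithinAt_rd (hu : ConcaveOn ℝ Set.univ u) (t : ℝ) :
    HasDerivWithinAt u (rd u t) (Set.Ioi t) t := by
  rw [hasDerivWithinAt_iff_tendsto_slope' (Set.notMem_Ioi_self)]
  have anti : AntitoneOn (slope u t) (Set.Ioi t) :=
    (hu.slope_anti (Set.mem_univ t)).mono (fun y hy => mem_diff_univ (ne_of_gt hy))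
  exact anti.tendsto_nhdsGT (bddAbove_slope hu t)

lemma rd_nonneg (hu : ConcaveOn ℝ Set.univ u) (hm : Monotone u) (t : ℝ) : 0 ≤ rd u t := by
  have h1 : slope u t (t + 1) ≤ rd u t :=
    le_csSup (bddAbove_slope hu t) (Set.mem_image_of_mem _ (by simp : t + 1 ∈ Set.Ioi t))
  have h0 : 0 ≤ slope u t (t + 1) := by
    rw [slope_def_field]
    have := hm (by linarith : t ≤ t + 1)
    apply div_nonneg <;> linarith
  linarith

lemma rd_antitone (hu : ConcaveOn ℝ Set.univ u) : Antitone (rd u) := by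
  intro s t hst
  rcases eq_or_lt_of_le hst with rfl | h
  · exact le_rfl
  refine csSup_le (nonempty_slope t) ?_
  rintro v ⟨y, hy, rfl⟩
  have hy' : t < y := hy
  have h1 : slope u t y ≤ slope u t s :=
    (hu.slope_anti (Set.mem_univ t)) (mem_diff_univ (ne_of_lt h))
      (mem_diff_univ (ne_of_gt hy')) (by linarith)
  have h2 : slope u t s = slope u s t := slope_comm u t s
  have h3 : slope u s t ≤ rd u s :=
    le_csSup (bddAbove_slope hu s) (Set.mem_image_of_mem _ (by simp [h] : t ∈ Set.Ioi s))
  linarith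

lemma continuous_of_concave (hu : ConcaveOn ℝ Set.univ u) : Continuous u := by
  rw [← continuousOn_univ]
  exact hu.continuousOn isOpen_univ

lemma rd_ftc (hu : ConcaveOn ℝ Set.univ u) {x y : ℝ} (hxy : x ≤ y) :
    ∫ t in x..y, rd u t = u y - u x :=
  integral_eq_sub_of_hasDeriv_right_of_le hxy
    ((continuous_of_concave hu).continuousOn)
    (fun t _ => hasDerivWithinAt_rd hu t)
    ((rd_antitone hu).intervalIntegrable)



lemma key_pos {a b : ℝ} (hab : a ≤ b) (φ F G : ℝ → ℝ)
    (hφa : Antitone φ) (hφ0 : ∀ t, 0 ≤ φ t)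
    (hFm : Monotone F) (hGm : Monotone G)
    (hF1 : ∀ t, |F t| ≤ 1) (hG1 : ∀ t, |G t| ≤ 1)
    (hdom : ∀ x ∈ Set.Icc a b, (∫ t in a..x, F t) ≤ ∫ t in a..x, G t) :
    0 ≤ ∫ t in Set.Icc a b, (G t - F t) * φ t := by
  set c := φ a with hc
  set μ1 := volume.restrict (Set.Icc a b) with hμ1
  set μ2 := volume.restrict (Set.Icc 0 c) with hμ2
  haveI : IsFiniteMeasure μ1 := ⟨by rw [Measure.restrict_apply_univ]; exact measure_Icc_lt_top⟩
  haveI : IsFiniteMeasure μ2 := ⟨by rw [Measure.restrict_apply_univ]; exact measure_Icc_lt_top⟩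
  have hφmeas : Measurable φ := hφa.measurable
  set f : ℝ → ℝ → ℝ := fun t s => if s < φ t then G t - F t else 0 with hf
  have hfmeas : Measurable (Function.uncurry f) := by
    apply Measurable.ite
    · exact measurableSet_lt measurable_snd (hφmeas.comp measurable_fst)
    · exact ((hGm.measurable.comp measurable_fst).sub (hFm.measurable.comp measurable_fst))
    · exact measurable_const
  have hfint : Integrable (Function.uncurry f) (μ1.prod μ2) := by
    refine Integrable.mono' (integrable_const 2) hfmeas.aestronglyMeasurable ?_
    refine Filter.Eventually.of_forall ?_
    rintro ⟨t, s⟩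
    simp only [Function.uncurry]
    by_cases h : s < φ t
    · simp only [hf, if_pos h]
      calc |G t - F t| ≤ |G t| + |F t| := abs_sub _ _
        _ ≤ 2 := by linarith [hF1 t, hG1 t]
    · simp [hf, if_neg h]
  have swap := integral_integral_swap hfint
  have hL : ∫ t, (∫ s, f t s ∂μ2) ∂μ1 = ∫ t in Set.Icc a b, (G t - F t) * φ t := by
    refine setIntegral_congr_fun measurableSet_Icc ?_
    intro t ht
    have h1 : ∀ s, f t s = (Set.Iio (φ t)).indicator (fun _ => G t - F t) s := by
      intro s; simp [hf, Set.indicator_apply, Set.mem_Iio]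
    calc ∫ s, f t s ∂μ2
        = ∫ s in Set.Icc 0 c, (Set.Iio (φ t)).indicator (fun _ => G t - F t) s := by
          rw [hμ2]; exact integral_congr_ae (Filter.Eventually.of_forall h1)
      _ = ∫ _ in Set.Icc 0 c ∩ Set.Iio (φ t), (G t - F t) :=
          setIntegral_indicator measurableSet_Iio
      _ = (volume (Set.Icc 0 c ∩ Set.Iio (φ t))).toReal • (G t - F t) := setIntegral_const _
      _ = (G t - F t) * φ t := by
          have hle : φ t ≤ c := hφa ht.1
          have hset : Set.Icc 0 c ∩ Set.Iio (φ t) = Set.Ico 0 (φ t) := by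
            ext x
            simp only [Set.mem_inter_iff, Set.mem_Icc, Set.mem_Iio, Set.mem_Ico]
            constructor
            · rintro ⟨⟨h0, _⟩, h2⟩; exact ⟨h0, h2⟩
            · rintro ⟨h0, h2⟩; exact ⟨⟨h0, le_trans (le_of_lt h2) hle⟩, h2⟩
          rw [hset, Real.volume_Ico, smul_eq_mul, sub_zero,
            ENNReal.toReal_ofReal (hφ0 t)]
          ring
  have hR : 0 ≤ ∫ s, (∫ t, f t s ∂μ1) ∂μ2 := by
    refine integral_nonneg (fun s => ?_)
    show (0:ℝ) ≤ ∫ t, f t s ∂μ1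
    by_cases hne : ∃ t0 ∈ Set.Icc a b, s < φ t0
    · obtain ⟨t0, ht0, hst0⟩ := hne
      set S := {t | t ∈ Set.Icc a b ∧ s < φ t} with hS
      have hSne : S.Nonempty := ⟨t0, ht0, hst0⟩
      have hSbdd : BddAbove S := ⟨b, fun x hx => hx.1.2⟩
      set m := sSup S with hm
      have hmb : m ≤ b := csSup_le hSne (fun x hx => hx.1.2)
      have ham : a ≤ m := le_trans ht0.1 (le_csSup hSbdd ⟨ht0, hst0⟩)
      have key : ∀ t ∈ Set.Icc a b, t ≠ m →
          f t s = (Set.Ico a m).indicator (fun t => G t - F t) t := by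
        intro t ht htm
        rcases lt_or_gt_of_ne htm with hlt | hgt
        · have hst : s < φ t := by
            obtain ⟨t', ht', hlt'⟩ := exists_lt_of_lt_csSup hSne hlt
            exact lt_of_lt_of_le ht'.2 (hφa (le_of_lt hlt'))
          simp [hf, if_pos hst,
            Set.indicator_of_mem (show t ∈ Set.Ico a m from ⟨ht.1, hlt⟩)]
        · have hns : ¬ s < φ t := fun hcon =>
            absurd (le_csSup hSbdd ⟨ht, hcon⟩) (not_le.mpr hgt)
          have hno : t ∉ Set.Ico a m := by
            simp only [Set.mem_Ico, not_and, not_lt]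
            intro _; linarith
          simp [hf, if_neg hns, Set.indicator_of_notMem hno]
      have h2 : ∀ᵐ (t : ℝ) ∂volume, t ≠ m := by
        have hsingle : {t : ℝ | ¬ t ≠ m} = {m} := by ext; simp
        rw [ae_iff, hsingle]; exact measure_singleton m
      have hae : (fun t => f t s) =ᵐ[μ1] (Set.Ico a m).indicator (fun t => G t - F t) := by
        filter_upwards [ae_restrict_mem measurableSet_Icc, ae_restrict_of_ae h2] with t ht htm
        exact key t ht htm
      have heq : ∫ t, f t s ∂μ1 = ∫ t in a..m, (G t - F t) := by
        calc ∫ t, f t s ∂μ1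
            = ∫ t in Set.Icc a b, (Set.Ico a m).indicator (fun t => G t - F t) t :=
              integral_congr_ae hae
          _ = ∫ t in Set.Icc a b ∩ Set.Ico a m, (G t - F t) :=
              setIntegral_indicator measurableSet_Ico
          _ = ∫ t in Set.Ico a m, (G t - F t) := by
              rw [Set.inter_eq_self_of_subset_right
                (fun x hx => Set.mem_Icc.mpr ⟨(Set.mem_Ico.mp hx).1, le_trans (le_of_lt (Set.mem_Ico.mp hx).2) hmb⟩)]
          _ = ∫ t in a..m, (G t - F t) := by
              rw [intervalIntegral.integral_of_le ham, integral_Ioc_eq_integral_Ioo,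
                ← integral_Ico_eq_integral_Ioo]
      rw [heq, intervalIntegral.integral_sub hGm.intervalIntegrable hFm.intervalIntegrable]
      linarith [hdom m ⟨ham, hmb⟩]
    · push_neg at hne
      have hz : (fun t => f t s) =ᵐ[μ1] (fun _ => (0:ℝ)) := by
        filter_upwards [ae_restrict_mem measurableSet_Icc] with t ht
        simp [hf, not_lt.mpr (hne t ht)]
      rw [integral_congr_ae hz]
      simp
  calc (0:ℝ) ≤ ∫ s, (∫ t, f t s ∂μ1) ∂μ2 := hR
    _ = ∫ t, (∫ s, f t s ∂μ2) ∂μ1 := swap.symm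
    _ = ∫ t in Set.Icc a b, (G t - F t) * φ t := hL

lemma expectation_eq {Ω : Type*} [MeasurableSpace Ω] (μ : Measure Ω) [IsProbabilityMeasure μ]
    {a b : ℝ} (X : Ω → ℝ) (hX : Measurable X)
    (hXsupp : ∀ᵐ ω ∂μ, X ω ∈ Set.Icc a b)
    {u : ℝ → ℝ} (hm : Monotone u) (hc : ConcaveOn ℝ Set.univ u) :
    ∫ ω, u (X ω) ∂μ
      = u a + ∫ t in Set.Icc a b, (μ {ω | t < X ω}).toReal * rd u t := by
  haveI : IsFiniteMeasure (volume.restrict (Set.Icc a b)) :=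
    ⟨by rw [Measure.restrict_apply_univ]; exact measure_Icc_lt_top⟩
  have hrd0 := rd_nonneg hc hm
  have hrda := rd_antitone hc
  have hum : Measurable u := hm.measurable
  have haes : AEStronglyMeasurable (fun ω => u (X ω)) μ := (hum.comp hX).aestronglyMeasurable
  have hint : Integrable (fun ω => u (X ω)) μ := by
    refine Integrable.mono' (integrable_const (max |u a| |u b|)) haes ?_
    filter_upwards [hXsupp] with ω hω
    have h1 : u a ≤ u (X ω) := hm hω.1
    have h2 : u (X ω) ≤ u b := hm hω.2
    rw [Real.norm_eq_abs, abs_le]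
    constructor
    · linarith [neg_abs_le (u a), le_max_left |u a| |u b|]
    · linarith [le_abs_self (u b), le_max_right |u a| |u b|]
  set f : Ω → ℝ → ℝ := fun ω t => if a ≤ t ∧ t < X ω then rd u t else 0 with hfdef
  have hptw : ∀ᵐ ω ∂μ, u (X ω) - u a = ∫ t in Set.Icc a b, f ω t := by
    filter_upwards [hXsupp] with ω hω
    have h2 : ∀ t, f ω t = (Set.Ico a (X ω)).indicator (rd u) t := by
      intro t; simp [hfdef, Set.indicator_apply, Set.mem_Ico]
    calc u (X ω) - u a = ∫ t in a..(X ω), rd u t := (rd_ftc hc hω.1).symm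
      _ = ∫ t in Set.Ico a (X ω), rd u t := by
          rw [intervalIntegral.integral_of_le hω.1, integral_Ioc_eq_integral_Ioo,
            ← integral_Ico_eq_integral_Ioo]
      _ = ∫ t in Set.Icc a b ∩ Set.Ico a (X ω), rd u t := by
          rw [Set.inter_eq_self_of_subset_right (fun x hx => Set.mem_Icc.mpr
            ⟨(Set.mem_Ico.mp hx).1, le_trans (le_of_lt (Set.mem_Ico.mp hx).2) hω.2⟩)]
      _ = ∫ t in Set.Icc a b, (Set.Ico a (X ω)).indicator (rd u) t :=
          (setIntegral_indicator measurableSet_Ico).symm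
      _ = ∫ t in Set.Icc a b, f ω t :=
          integral_congr_ae (Filter.Eventually.of_forall (fun t => (h2 t).symm))
  have humeas : Function.uncurry f
      = fun q : Ω × ℝ => if a ≤ q.2 ∧ q.2 < X q.1 then rd u q.2 else 0 := rfl
  have hmeasf : Measurable (Function.uncurry f) := by
    rw [humeas]
    apply Measurable.ite
    · exact ((measurableSet_le measurable_const measurable_snd).inter
        (measurableSet_lt measurable_snd (hX.comp measurable_fst)))
    · exact hrda.measurable.comp measurable_snd
    · exact measurable_const
  have hintf : Integrable (Function.uncurry f) (μ.prod (volume.restrict (Set.Icc a b))) := by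
    refine Integrable.mono' (integrable_const (rd u a)) hmeasf.aestronglyMeasurable ?_
    refine Filter.Eventually.of_forall ?_
    rintro ⟨ω, t⟩
    show |f ω t| ≤ rd u a
    by_cases h : a ≤ t ∧ t < X ω
    · simp only [hfdef]
      rw [if_pos h, abs_of_nonneg (hrd0 t)]
      exact hrda h.1
    · simp only [hfdef]
      rw [if_neg h]
      simpa using hrd0 a
  have swap := integral_integral_swap hintf
  have hinner : ∫ t in Set.Icc a b, (∫ ω, f ω t ∂μ)
      = ∫ t in Set.Icc a b, (μ {ω | t < X ω}).toReal * rd u t := by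
    refine setIntegral_congr_fun measurableSet_Icc (fun t ht => ?_)
    have hfun : (fun ω => f ω t) = Set.indicator {ω | t < X ω} (fun _ => rd u t) := by
      funext ω
      by_cases h : t < X ω
      · simp only [hfdef]
        rw [if_pos ⟨ht.1, h⟩]
        exact (Set.indicator_of_mem (show ω ∈ {ω | t < X ω} from h) (fun _ => rd u t)).symm
      · simp only [hfdef]
        rw [if_neg (fun hcon => h hcon.2)]
        exact (Set.indicator_of_notMem (show ω ∉ {ω | t < X ω} from h) (fun _ => rd u t)).symm
    rw [hfun, integral_indicator_const _ (measurableSet_lt measurable_const hX)]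
    rw [smul_eq_mul]
    rfl
  have hmain : ∫ ω, (u (X ω) - u a) ∂μ
      = ∫ t in Set.Icc a b, (μ {ω | t < X ω}).toReal * rd u t := by
    rw [integral_congr_ae hptw, swap, hinner]
  have hsub : ∫ ω, (u (X ω) - u a) ∂μ = (∫ ω, u (X ω) ∂μ) - u a := by
    rw [integral_sub hint (integrable_const _), MeasureTheory.integral_const]
    simp
  linarith [hmain, hsub]

end SASDaux

open SASDaux in
/-- Second-order ascending stochastic dominance of `X` over `Y` implies that every
risk-averse investor (nondecreasing concave utility `u`) attains higher expected
utility from `X` than from `Y`. -/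

theorem SASD_implies_expected_utility_riskAverse
    {Ω : Type*} [MeasurableSpace Ω] (μ ν : Measure Ω)
    [IsProbabilityMeasure μ] [IsProbabilityMeasure ν]
    (a b : ℝ) (X Y : Ω → ℝ) (hX : Measurable X) (hY : Measurable Y)
    (hXsupp : ∀ᵐ ω ∂μ, X ω ∈ Set.Icc a b) (hYsupp : ∀ᵐ ω ∂ν, Y ω ∈ Set.Icc a b)
    (F G : ℝ → ℝ)
    (hF : ∀ t, F t = (μ {ω | X ω ≤ t}).toReal)
    (hG : ∀ t, G t = (ν {ω | Y ω ≤ t}).toReal)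
    (hdom : ∀ x ∈ Set.Icc a b, (∫ t in a..x, F t) ≤ ∫ t in a..x, G t) :
    ∀ u : ℝ → ℝ, Monotone u → ConcaveOn ℝ Set.univ u →
      (∫ ω, u (Y ω) ∂ν) ≤ ∫ ω, u (X ω) ∂μ := by
  intro u hm hc
  haveI : (ae μ).NeBot := ae_neBot.mpr (IsProbabilityMeasure.ne_zero μ)
  have hab : a ≤ b := by
    obtain ⟨ω, hω⟩ := hXsupp.exists
    exact le_trans hω.1 hω.2
  haveI : IsFiniteMeasure (volume.restrict (Set.Icc a b)) :=
    ⟨by rw [Measure.restrict_apply_univ]; exact measure_Icc_lt_top⟩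
  have hrd0 := rd_nonneg hc hm
  have hrda := rd_antitone hc
  have hFmono : Monotone F := by
    intro s t hst
    rw [hF s, hF t]
    exact ENNReal.toReal_mono (measure_ne_top μ _)
      (measure_mono (fun ω hω => le_trans hω hst))
  have hGmono : Monotone G := by
    intro s t hst
    rw [hG s, hG t]
    exact ENNReal.toReal_mono (measure_ne_top ν _)
      (measure_mono (fun ω hω => le_trans hω hst))
  have hF1 : ∀ t, |F t| ≤ 1 := by
    intro t
    rw [hF t, abs_of_nonneg ENNReal.toReal_nonneg]
    calc (μ _).toReal ≤ (1 : ℝ≥0∞).toReal := ENNReal.toReal_mono ENNReal.one_ne_top prob_le_one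
      _ = 1 := by simp
  have hG1 : ∀ t, |G t| ≤ 1 := by
    intro t
    rw [hG t, abs_of_nonneg ENNReal.toReal_nonneg]
    calc (ν _).toReal ≤ (1 : ℝ≥0∞).toReal := ENNReal.toReal_mono ENNReal.one_ne_top prob_le_one
      _ = 1 := by simp
  have hFc : ∀ t, (μ {ω | t < X ω}).toReal = 1 - F t := by
    intro t
    have hcompl : {ω | t < X ω} = {ω | X ω ≤ t}ᶜ := by ext ω; simp [not_le]
    rw [hcompl, measure_compl (show MeasurableSet {ω | X ω ≤ t} from hX measurableSet_Iic) (measure_ne_top μ _), measure_univ,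
      ENNReal.toReal_sub_of_le prob_le_one ENNReal.one_ne_top, hF t]
    simp
  have hGc : ∀ t, (ν {ω | t < Y ω}).toReal = 1 - G t := by
    intro t
    have hcompl : {ω | t < Y ω} = {ω | Y ω ≤ t}ᶜ := by ext ω; simp [not_le]
    rw [hcompl, measure_compl (show MeasurableSet {ω | Y ω ≤ t} from hY measurableSet_Iic) (measure_ne_top ν _), measure_univ,
      ENNReal.toReal_sub_of_le prob_le_one ENNReal.one_ne_top, hG t]
    simp
  have hkey := key_pos hab (rd u) F G hrda hrd0 hFmono hGmono hF1 hG1 hdom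
  rw [expectation_eq μ X hX hXsupp hm hc, expectation_eq ν Y hY hYsupp hm hc]
  have e1 : ∫ t in Set.Icc a b, (μ {ω | t < X ω}).toReal * rd u t
      = ∫ t in Set.Icc a b, (1 - F t) * rd u t :=
    setIntegral_congr_fun measurableSet_Icc (fun t _ => by rw [hFc t])
  have e2 : ∫ t in Set.Icc a b, (ν {ω | t < Y ω}).toReal * rd u t
      = ∫ t in Set.Icc a b, (1 - G t) * rd u t :=
    setIntegral_congr_fun measurableSet_Icc (fun t _ => by rw [hGc t])
  rw [e1, e2]
  have hbF : Integrable (fun t => (1 - F t) * rd u t) (volume.restrict (Set.Icc a b)) := by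
    refine Integrable.mono' (integrable_const (2 * rd u a))
      (((measurable_const.sub hFmono.measurable).mul hrda.measurable).aestronglyMeasurable) ?_
    filter_upwards [ae_restrict_mem measurableSet_Icc] with t ht
    rw [Real.norm_eq_abs, abs_mul, abs_of_nonneg (hrd0 t)]
    have h1 : |1 - F t| ≤ 2 := by
      have := abs_sub (1 : ℝ) (F t)
      have := hF1 t
      simp only [abs_one] at *
      linarith
    have h2 : rd u t ≤ rd u a := hrda ht.1
    exact mul_le_mul h1 h2 (hrd0 t) (by norm_num)
  have hbG : Integrable (fun t => (1 - G t) * rd u t) (volume.restrict (Set.Icc a b)) := by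
    refine Integrable.mono' (integrable_const (2 * rd u a))
      (((measurable_const.sub hGmono.measurable).mul hrda.measurable).aestronglyMeasurable) ?_
    filter_upwards [ae_restrict_mem measurableSet_Icc] with t ht
    rw [Real.norm_eq_abs, abs_mul, abs_of_nonneg (hrd0 t)]
    have h1 : |1 - G t| ≤ 2 := by
      have := abs_sub (1 : ℝ) (G t)
      have := hG1 t
      simp only [abs_one] at *
      linarith
    have h2 : rd u t ≤ rd u a := hrda ht.1
    exact mul_le_mul h1 h2 (hrd0 t) (by norm_num)
  have hsub : (∫ t in Set.Icc a b, (1 - F t) * rd u t)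
      - (∫ t in Set.Icc a b, (1 - G t) * rd u t)
      = ∫ t in Set.Icc a b, (G t - F t) * rd u t := by
    rw [← integral_sub hbF hbG]
    exact integral_congr_ae (Filter.Eventually.of_forall (fun t => by ring))
  linarith
end

section
/- Let X and Y be random variables supported in [a,b] with CDFs F and G. If F_2^D(x) ≥ G_2^D(x) for all x ∈ [a,b], where F_2^D(x) = ∫_x^b (1 − F(t)) dt and G_2^D(x) = ∫_x^b (1 − G(t)) dt (second-order descending stochastic dominance of X over Y), then E[u(X)] ≥ E[u(Y)] for every nondecreasing convex function u : ℝ → ℝ. (Second-order DSD implies that every risk-seeking investor attains higher expected utility from the dominant asset.) -/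
open MeasureTheory intervalIntegral

noncomputable def rdsd (u : ℝ → ℝ) (x : ℝ) : ℝ := sInf (slope u x '' Set.Ioi x)

lemma slope_nonneg' {u : ℝ → ℝ} (hu : Monotone u) (x : ℝ) {y : ℝ} (hy : x < y) :
    0 ≤ slope u x y := by
  rw [slope_def_field]
  exact div_nonneg (by simpa [sub_nonneg] using hu hy.le) (by linarith)

lemma rdsd_bdd {u : ℝ → ℝ} (hu : Monotone u) (x : ℝ) :
    BddBelow (slope u x '' Set.Ioi x) :=
  ⟨0, by rintro _ ⟨y, hy, rfl⟩; exact slope_nonneg' hu x hy⟩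

lemma rdsd_nonneg {u : ℝ → ℝ} (hu : Monotone u) (x : ℝ) : 0 ≤ rdsd u x := by
  have hne : (slope u x '' Set.Ioi x).Nonempty :=
    ⟨_, Set.mem_image_of_mem _ (by simp : x+1 ∈ Set.Ioi x)⟩
  apply le_csInf hne
  rintro _ ⟨y, hy, rfl⟩
  exact slope_nonneg' hu x hy

lemma slope_monoOn {u : ℝ → ℝ} (hc : ConvexOn ℝ Set.univ u) (x : ℝ) :
    MonotoneOn (slope u x) (Set.Ioi x) := by
  intro y hy z hz hyz
  simp only [slope_def_field]
  exact ConvexOn.secant_mono hc trivial trivial trivial (ne_of_gt hy)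
    (ne_of_gt (lt_of_lt_of_le hy hyz)) hyz

lemma rdsd_hasDeriv {u : ℝ → ℝ} (hu : Monotone u) (hc : ConvexOn ℝ Set.univ u) (x : ℝ) :
    HasDerivWithinAt u (rdsd u x) (Set.Ioi x) x := by
  rw [hasDerivWithinAt_iff_tendsto_slope' (Set.notMem_Ioi_self)]
  exact MonotoneOn.tendsto_nhdsGT (slope_monoOn hc x) (rdsd_bdd hu x)

lemma rdsd_mono {u : ℝ → ℝ} (hu : Monotone u) (hc : ConvexOn ℝ Set.univ u) :
    Monotone (rdsd u) := by
  intro x x' hxx'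
  rcases eq_or_lt_of_le hxx' with rfl | hlt
  · exact le_refl _
  have hne : (slope u x' '' Set.Ioi x').Nonempty :=
    ⟨_, Set.mem_image_of_mem _ (by simp : x'+1 ∈ Set.Ioi x')⟩
  apply le_csInf hne
  rintro _ ⟨y, hy, rfl⟩
  have h1 : slope u x x' ≤ slope u x' y := by
    simp only [slope_def_field]
    exact hc.slope_mono_adjacent trivial trivial hlt hy
  have h2 : rdsd u x ≤ slope u x x' := csInf_le (rdsd_bdd hu x) ⟨x', hlt, rfl⟩
  linarith

lemma rdsd_ftc {u : ℝ → ℝ} (hu : Monotone u) (hc : ConvexOn ℝ Set.univ u)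
    {x y : ℝ} (hxy : x ≤ y) : ∫ t in x..y, rdsd u t = u y - u x := by
  apply intervalIntegral.integral_eq_sub_of_hasDeriv_right_of_le hxy
  · exact (hc.locallyLipschitz.continuous).continuousOn
  · exact fun t _ => rdsd_hasDeriv hu hc t
  · exact (rdsd_mono hu hc).intervalIntegrable

lemma upperPos {a b : ℝ} (h : ℝ → ℝ)
    (hH : ∀ x ∈ Set.Icc a b, 0 ≤ ∫ t in Set.Ico x b, h t)
    (f : ℝ → ℝ) (hf : Monotone f) (c : ℝ) :
    0 ≤ ∫ t in Set.Ico a b ∩ {t | c ≤ f t}, h t := by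
  set S := Set.Ico a b ∩ {t | c ≤ f t} with hS
  rcases Set.eq_empty_or_nonempty S with he | hne
  · simp [he]
  have hbdd : BddBelow S := ⟨a, fun s hs => hs.1.1⟩
  set x := sInf S with hx
  obtain ⟨s₀, hs₀⟩ := hne
  have hxa : a ≤ x := le_csInf ⟨s₀, hs₀⟩ (fun s hs => hs.1.1)
  have hxb : x ≤ b := (csInf_le hbdd hs₀).trans hs₀.1.2.le
  have hsub1 : Set.Ioo x b ⊆ S := by
    intro t ht
    obtain ⟨s, hsS, hst⟩ := exists_lt_of_csInf_lt ⟨s₀, hs₀⟩ ht.1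
    exact ⟨⟨hsS.1.1.trans hst.le, ht.2⟩, le_trans hsS.2 (hf hst.le)⟩
  have hsub2 : S ⊆ Set.Ico x b := fun s hs => ⟨csInf_le hbdd hs, hs.1.2⟩
  have hae : S =ᵐ[volume] Set.Ioo x b := by
    rw [MeasureTheory.ae_eq_set]
    constructor
    · apply measure_mono_null (t := {x}) _ (Real.volume_singleton)
      intro s hs
      have h1 := hsub2 hs.1
      have : ¬ (x < s ∧ s < b) := hs.2
      have : s = x := by
        rcases eq_or_lt_of_le h1.1 with h | h
        · exact h.symm
        · exact absurd ⟨h, h1.2⟩ this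
      simp [this]
    · have : Set.Ioo x b \ S = ∅ := Set.diff_eq_empty.2 hsub1
      simp [this]
  calc (0:ℝ) ≤ ∫ t in Set.Ico x b, h t := hH x ⟨hxa, hxb⟩
    _ = ∫ t in Set.Ioo x b, h t := MeasureTheory.integral_Ico_eq_integral_Ioo
    _ = ∫ t in S, h t := (MeasureTheory.setIntegral_congr_set hae).symm

lemma intOn_mul {s : Set ℝ} (hs : MeasurableSet s) {h g : ℝ → ℝ}
    (hh : MeasureTheory.IntegrableOn h s) (hg : Measurable g) (C : ℝ)
    (hC : ∀ t ∈ s, |g t| ≤ C) :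
    MeasureTheory.IntegrableOn (fun t => g t * h t) s := by
  apply MeasureTheory.Integrable.mono' (hh.norm.const_mul C)
  · exact (hg.aestronglyMeasurable.mul hh.1)
  · filter_upwards [MeasureTheory.ae_restrict_mem hs] with t ht
    calc ‖g t * h t‖ = |g t| * |h t| := by rw [norm_mul]; rfl
      _ ≤ C * |h t| := by
          apply mul_le_mul_of_nonneg_right (hC t ht) (abs_nonneg _)
      _ = C * ‖h t‖ := rfl

lemma stepPos {a b : ℝ} (f h : ℝ → ℝ) (hf : Monotone f) (hf0 : 0 ≤ f a)
    (hh : MeasureTheory.IntegrableOn h (Set.Ico a b))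
    (hH : ∀ x ∈ Set.Icc a b, 0 ≤ ∫ t in Set.Ico x b, h t) :
    0 ≤ ∫ t in Set.Ico a b, f t * h t := by
  rcases le_or_gt b a with hba | hab
  · have : Set.Ico a b = ∅ := Set.Ico_eq_empty (by exact fun hlt => absurd hba (not_le.2 hlt))
    simp [this]
  have hab' : a ≤ b := hab.le
  have hmeas : MeasurableSet (Set.Ico a b) := measurableSet_Ico
  set C := ∫ t in Set.Ico a b, |h t| with hC
  have hC0 : 0 ≤ C := MeasureTheory.integral_nonneg (fun t => abs_nonneg _)
  -- integrability of f * h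
  have hfb : ∀ t ∈ Set.Ico a b, |f t| ≤ max |f a| |f b| := by
    intro t ht
    rw [abs_le]
    constructor
    · have := hf ht.1
      have h2 : -(max |f a| |f b|) ≤ -|f a| := neg_le_neg (le_max_left _ _)
      have : -|f a| ≤ f a := neg_abs_le _
      nlinarith [le_max_left |f a| |f b|, neg_abs_le (f a), hf ht.1]
    · calc f t ≤ f b := hf ht.2.le
        _ ≤ |f b| := le_abs_self _
        _ ≤ max |f a| |f b| := le_max_right _ _
  have hfh : MeasureTheory.IntegrableOn (fun t => f t * h t) (Set.Ico a b) :=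
    intOn_mul hmeas hh hf.measurable _ hfb
  -- main estimate
  have key : ∀ ε : ℝ, 0 < ε → -(ε * C) ≤ ∫ t in Set.Ico a b, f t * h t := by
    intro ε hε
    obtain ⟨N, hN⟩ := exists_nat_ge ((f b - f a) / ε)
    have hNε : f b - f a ≤ N * ε := by
      rw [div_le_iff₀ hε] at hN; linarith
    -- step functions
    set g : ℕ → ℝ → ℝ := fun k t => if f a + (k+1)*ε ≤ f t then (1:ℝ) else 0 with hg
    set s : ℝ → ℝ := fun t => f a + ε * ∑ k ∈ Finset.range N, g k t with hs
    have hcard : ∀ t, ∑ k ∈ Finset.range N, g k t =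
        ((Finset.range N).filter (fun k : ℕ => f a + ((k:ℝ)+1)*ε ≤ f t)).card := by
      intro t
      rw [hg]
      simp [Finset.sum_boole]
    -- claim 1 : s t ≤ f t for a ≤ t
    have claim1 : ∀ t, a ≤ t → s t ≤ f t := by
      intro t hat
      have hfat : f a ≤ f t := hf hat
      set m := ((Finset.range N).filter (fun k : ℕ => f a + ((k:ℝ)+1)*ε ≤ f t)).card with hm
      have hsub : (Finset.range N).filter (fun k : ℕ => f a + ((k:ℝ)+1)*ε ≤ f t) ⊆
          Finset.range ⌊(f t - f a)/ε⌋₊ := by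
        intro k hk
        rw [Finset.mem_filter] at hk
        rw [Finset.mem_range]
        have : ((k:ℝ)+1) * ε ≤ f t - f a := by linarith [hk.2]
        have h2 : ((k+1 : ℕ):ℝ) ≤ (f t - f a)/ε := by
          rw [le_div_iff₀ hε]; push_cast; linarith
        have := Nat.le_floor h2
        omega
      have hm1 : (m:ℝ) ≤ (f t - f a)/ε := by
        have h1 := Finset.card_le_card hsub
        rw [Finset.card_range] at h1
        calc (m:ℝ) ≤ (⌊(f t - f a)/ε⌋₊ : ℝ) := by
              have h1' : m ≤ ⌊(f t - f a)/ε⌋₊ := by rw [hm]; exact h1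
              exact_mod_cast h1'
          _ ≤ (f t - f a)/ε := Nat.floor_le (div_nonneg (by linarith) hε.le)
      have h2 : ε * (m:ℝ) ≤ f t - f a := by
        calc ε * (m:ℝ) = (m:ℝ) * ε := mul_comm _ _
          _ ≤ f t - f a := by
            rw [← div_mul_cancel₀ (f t - f a) (ne_of_gt hε)]
            exact mul_le_mul_of_nonneg_right hm1 hε.le
      simp only [hs, hcard t, ← hm]
      linarith
    -- claim 2 : f t ≤ s t + ε for t ≤ b
    have claim2 : ∀ t, t ≤ b → f t ≤ s t + ε := by
      intro t htb
      set m := ((Finset.range N).filter (fun k : ℕ => f a + ((k:ℝ)+1)*ε ≤ f t)).card with hm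
      simp only [hs, hcard t, ← hm]
      by_contra hcon
      push_neg at hcon
      have hgt : f a + ((m:ℝ)+1)*ε < f t := by linarith
      have hsub : Finset.range (m+1) ⊆
          (Finset.range N).filter (fun k : ℕ => f a + ((k:ℝ)+1)*ε ≤ f t) := by
        intro k hk
        rw [Finset.mem_range] at hk
        have hkm : (k:ℝ) ≤ (m:ℝ) := by exact_mod_cast Nat.lt_succ_iff.1 hk
        have h1 : f a + ((k:ℝ)+1)*ε ≤ f a + ((m:ℝ)+1)*ε := by nlinarith
        have h2 : f a + ((k:ℝ)+1)*ε ≤ f t := le_trans h1 hgt.le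
        have hfb' : f t ≤ f b := hf htb
        have h3 : ((k:ℝ)+1)*ε < (N:ℝ)*ε := by nlinarith
        have h4 : k < N := by
          have : (k:ℝ)+1 < (N:ℝ) := lt_of_mul_lt_mul_right h3 hε.le
          exact_mod_cast Nat.lt_of_lt_of_le (Nat.lt_succ_self k) (by exact_mod_cast this.le)
        rw [Finset.mem_filter, Finset.mem_range]
        exact ⟨h4, h2⟩
      have hc2 := Finset.card_le_card hsub
      rw [Finset.card_range, ← hm] at hc2
      omega
    -- integrability pieces
    have hgmeas : ∀ k, Measurable (g k) := fun k =>
      Measurable.ite (hf.measurable measurableSet_Ici) measurable_const measurable_const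
    have hgh : ∀ k, MeasureTheory.IntegrableOn (fun t => g k t * h t) (Set.Ico a b) := by
      intro k
      apply intOn_mul hmeas hh (hgmeas k) 1
      intro t _
      rw [hg]; dsimp only; split <;> simp
    have hsum : MeasureTheory.IntegrableOn
        (fun t => ∑ k ∈ Finset.range N, g k t * h t) (Set.Ico a b) :=
      MeasureTheory.integrable_finset_sum _ (fun k _ => hgh k)
    have hseq : (fun t => s t * h t) =
        fun t => f a * h t + ε * ∑ k ∈ Finset.range N, (g k t * h t) := by
      funext t
      rw [hs]
      dsimp only
      rw [← Finset.sum_mul]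
      ring
    have hsh : MeasureTheory.IntegrableOn (fun t => s t * h t) (Set.Ico a b) := by
      rw [hseq]
      exact (hh.const_mul (f a)).add (hsum.const_mul ε)
    have hkpos : ∀ k, 0 ≤ ∫ t in Set.Ico a b, g k t * h t := by
      intro k
      have heq : ∀ t, g k t * h t =
          ({t | f a + ((k:ℝ)+1)*ε ≤ f t}).indicator h t := by
        intro t
        rw [hg]
        simp only [Set.indicator_apply, Set.mem_setOf_eq]
        split <;> simp
      calc (0:ℝ) ≤ ∫ t in Set.Ico a b ∩ {t | f a + ((k:ℝ)+1)*ε ≤ f t}, h t :=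
            upperPos h hH f hf _
        _ = ∫ t in Set.Ico a b, ({t | f a + ((k:ℝ)+1)*ε ≤ f t}).indicator h t :=
            (MeasureTheory.setIntegral_indicator (hf.measurable measurableSet_Ici)).symm
        _ = ∫ t in Set.Ico a b, g k t * h t := by
            apply MeasureTheory.integral_congr_ae
            exact Filter.Eventually.of_forall (fun t => (heq t).symm)
    have hspos : 0 ≤ ∫ t in Set.Ico a b, s t * h t := by
      rw [hseq, MeasureTheory.integral_add (hh.const_mul (f a)) (hsum.const_mul ε),
        MeasureTheory.integral_const_mul, MeasureTheory.integral_const_mul,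
        MeasureTheory.integral_finset_sum _ (fun k _ => hgh k)]
      have h1 : 0 ≤ ∫ t in Set.Ico a b, h t := hH a ⟨le_rfl, hab'⟩
      have h2 : 0 ≤ ∑ k ∈ Finset.range N, ∫ t in Set.Ico a b, g k t * h t :=
        Finset.sum_nonneg (fun k _ => hkpos k)
      have := mul_nonneg hf0 h1
      have := mul_nonneg hε.le h2
      linarith
    have hfsh : MeasureTheory.IntegrableOn (fun t => (f t - s t) * h t) (Set.Ico a b) := by
      apply (hfh.sub hsh).congr
      exact Filter.Eventually.of_forall (fun t => by simp only [Pi.sub_apply]; ring)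
    have hdiff : (∫ t in Set.Ico a b, f t * h t) - ∫ t in Set.Ico a b, s t * h t
        = ∫ t in Set.Ico a b, (f t - s t) * h t := by
      rw [← MeasureTheory.integral_sub hfh hsh]
      apply MeasureTheory.integral_congr_ae
      exact Filter.Eventually.of_forall (fun t => by simp only [Pi.sub_apply]; ring)
    have hbound : |∫ t in Set.Ico a b, (f t - s t) * h t| ≤ ε * C := by
      calc |∫ t in Set.Ico a b, (f t - s t) * h t|
          ≤ ∫ t in Set.Ico a b, |(f t - s t) * h t| :=
            by simpa only [Real.norm_eq_abs] using
              MeasureTheory.norm_integral_le_integral_norm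
                (μ := volume.restrict (Set.Ico a b)) (fun t => (f t - s t) * h t)
        _ ≤ ∫ t in Set.Ico a b, ε * |h t| := by
            apply MeasureTheory.setIntegral_mono_on hfsh.abs (hh.abs.const_mul ε) hmeas
            intro t ht
            rw [abs_mul]
            apply mul_le_mul_of_nonneg_right _ (abs_nonneg _)
            have c1 := claim1 t ht.1
            have c2 := claim2 t ht.2.le
            rw [abs_le]
            constructor <;> linarith
        _ = ε * C := by rw [MeasureTheory.integral_const_mul, hC]
    have habs := abs_le.1 hbound
    linarith [hspos, hdiff, habs.1]
  by_contra hcon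
  push_neg at hcon
  set I := ∫ t in Set.Ico a b, f t * h t with hI
  have hε : 0 < -I / (2*(C+1)) := by
    apply div_pos (by linarith) (by linarith)
  have := key _ hε
  have h2 : -I / (2*(C+1)) * C ≤ -I/2 := by
    rw [div_mul_eq_mul_div, div_le_div_iff₀ (by linarith) (by norm_num)]
    nlinarith
  linarith

lemma bddMeasInt {g : ℝ → ℝ} (hg : Measurable g) (c : ℝ) (hc : ∀ t, |g t| ≤ c)
    {s : Set ℝ} (hs : MeasurableSet s) (hfin : volume s < ⊤) :
    MeasureTheory.IntegrableOn g s := by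
  haveI : MeasureTheory.IsFiniteMeasure (volume.restrict s) :=
    ⟨by rw [MeasureTheory.Measure.restrict_apply_univ]; exact hfin⟩
  apply MeasureTheory.Integrable.mono' (MeasureTheory.integrable_const c)
    hg.aestronglyMeasurable
  exact Filter.Eventually.of_forall (fun t => hc t)

lemma expect_repr {Ω : Type*} [MeasurableSpace Ω] (μ : MeasureTheory.Measure Ω)
    [MeasureTheory.IsProbabilityMeasure μ]
    {a b : ℝ} (X : Ω → ℝ) (hX : Measurable X)
    (hsupp : ∀ᵐ ω ∂μ, X ω ∈ Set.Icc a b)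
    (f : ℝ → ℝ) (hfmono : Monotone f)
    (u : ℝ → ℝ) (humono : Monotone u) (hucont : Continuous u)
    (hftc : ∀ c ∈ Set.Icc a b, u c - u a = ∫ t in a..c, f t) :
    ∫ ω, u (X ω) ∂μ = u a + ∫ t in Set.Ico a b, f t * (μ {ω | t < X ω}).toReal := by
  set ρ := volume.restrict (Set.Ico a b) with hρ
  haveI hfinρ : MeasureTheory.IsFiniteMeasure ρ :=
    ⟨by rw [hρ, MeasureTheory.Measure.restrict_apply_univ]; exact measure_Ico_lt_top⟩
  set k : Ω → ℝ → ℝ := fun ω t => if t < X ω then f t else 0 with hk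
  -- pointwise identity
  have hae : ∀ᵐ ω ∂μ, u (X ω) - u a = ∫ t, k ω t ∂ρ := by
    filter_upwards [hsupp] with ω hω
    have h1 : u (X ω) - u a = ∫ t in a..(X ω), f t := hftc _ hω
    have h2 : ∫ t in a..(X ω), f t = ∫ t in Set.Ioo a (X ω), f t := by
      rw [intervalIntegral.integral_of_le hω.1, MeasureTheory.integral_Ioc_eq_integral_Ioo]
    have h3 : ∫ t, k ω t ∂ρ = ∫ t in Set.Ico a b, (Set.Iio (X ω)).indicator f t := by
      rw [hρ]
      apply MeasureTheory.integral_congr_ae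
      apply Filter.Eventually.of_forall
      intro t
      rw [hk]
      by_cases hlt : t < X ω <;> simp [Set.indicator_apply, Set.mem_Iio, hlt]
    have h4 : ∫ t in Set.Ico a b, (Set.Iio (X ω)).indicator f t
        = ∫ t in Set.Ico a b ∩ Set.Iio (X ω), f t :=
      MeasureTheory.setIntegral_indicator measurableSet_Iio
    have h5 : Set.Ico a b ∩ Set.Iio (X ω) = Set.Ico a (X ω) := by
      rw [Set.Ico_inter_Iio, min_eq_right hω.2]
    rw [h1, h2, h3, h4, h5, MeasureTheory.integral_Ico_eq_integral_Ioo]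
  -- integrability on the product
  have hkmeas : Measurable (Function.uncurry k) := by
    have hset : MeasurableSet {p : Ω × ℝ | p.2 < X p.1} :=
      measurableSet_lt measurable_snd (hX.comp measurable_fst)
    have : Function.uncurry k =
        Set.indicator {p : Ω × ℝ | p.2 < X p.1} (fun p => f p.2) := by
      funext p
      rw [hk]
      by_cases hlt : p.2 < X p.1 <;>
        simp [Function.uncurry, Set.indicator_apply, Set.mem_setOf_eq, hlt]
    rw [this]
    exact (hfmono.measurable.comp measurable_snd).indicator hset
  have hkint : MeasureTheory.Integrable (Function.uncurry k) (μ.prod ρ) := by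
    apply MeasureTheory.Integrable.mono'
      (MeasureTheory.integrable_const (max |f a| |f b|)) hkmeas.aestronglyMeasurable
    have hprod : μ.prod ρ = (μ.prod volume).restrict (Set.univ ×ˢ Set.Ico a b) := by
      rw [hρ, ← MeasureTheory.Measure.prod_restrict, MeasureTheory.Measure.restrict_univ]
    have hmem : ∀ᵐ p ∂(μ.prod ρ), p ∈ Set.univ ×ˢ Set.Ico a b := by
      rw [hprod]
      exact MeasureTheory.ae_restrict_mem (MeasurableSet.univ.prod measurableSet_Ico)
    filter_upwards [hmem] with p hp
    have hp2 : p.2 ∈ Set.Ico a b := hp.2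
    rw [hk]
    simp only [Function.uncurry]
    have hb1 : |f p.2| ≤ max |f a| |f b| := by
      rw [abs_le]
      constructor
      · nlinarith [le_max_left |f a| |f b|, neg_abs_le (f a), hfmono hp2.1]
      · calc f p.2 ≤ f b := hfmono hp2.2.le
          _ ≤ |f b| := le_abs_self _
          _ ≤ max |f a| |f b| := le_max_right _ _
    rw [Real.norm_eq_abs]
    split
    · exact hb1
    · simp only [abs_zero]
      exact le_trans (abs_nonneg (f a)) (le_max_left _ _)
  -- inner integral
  have hinner : ∀ t, ∫ ω, k ω t ∂μ = f t * (μ {ω | t < X ω}).toReal := by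
    intro t
    have hset : MeasurableSet {ω | t < X ω} := hX measurableSet_Ioi
    have : (fun ω => k ω t) = Set.indicator {ω | t < X ω} (fun _ => f t) := by
      funext ω
      rw [hk]
      by_cases hlt : t < X ω <;> simp [Set.indicator_apply, Set.mem_setOf_eq, hlt]
    rw [this, MeasureTheory.integral_indicator_const _ hset, smul_eq_mul, mul_comm]
    rfl
  -- integrability of u ∘ X
  have huX : MeasureTheory.Integrable (fun ω => u (X ω)) μ := by
    apply MeasureTheory.Integrable.mono' (MeasureTheory.integrable_const (max |u a| |u b|))
      ((hucont.measurable.comp hX).aestronglyMeasurable)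
    filter_upwards [hsupp] with ω hω
    simp only [Function.comp_apply, Real.norm_eq_abs]
    rw [abs_le]
    constructor
    · linarith [le_max_left |u a| |u b|, neg_abs_le (u a), humono hω.1]
    · calc u (X ω) ≤ u b := humono hω.2
        _ ≤ |u b| := le_abs_self _
        _ ≤ max |u a| |u b| := le_max_right _ _
  -- assemble
  have hstep : ∫ ω, (u (X ω) - u a) ∂μ = ∫ t, f t * (μ {ω | t < X ω}).toReal ∂ρ := by
    calc ∫ ω, (u (X ω) - u a) ∂μ = ∫ ω, ∫ t, k ω t ∂ρ ∂μ :=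
          MeasureTheory.integral_congr_ae hae
      _ = ∫ t, ∫ ω, k ω t ∂μ ∂ρ := MeasureTheory.integral_integral_swap hkint
      _ = ∫ t, f t * (μ {ω | t < X ω}).toReal ∂ρ :=
          MeasureTheory.integral_congr_ae (Filter.Eventually.of_forall hinner)
  have hsub : ∫ ω, (u (X ω) - u a) ∂μ = (∫ ω, u (X ω) ∂μ) - u a := by
    rw [MeasureTheory.integral_sub huX (MeasureTheory.integrable_const _)]
    simp
  linarith [hstep, hsub]

lemma mono_abs_bd {f : ℝ → ℝ} (hf : Monotone f) {a b t : ℝ} (h1 : a ≤ t) (h2 : t ≤ b) :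
    |f t| ≤ max |f a| |f b| := by
  rw [abs_le]
  constructor
  · linarith [le_max_left |f a| |f b|, neg_abs_le (f a), hf h1]
  · calc f t ≤ f b := hf h2
      _ ≤ |f b| := le_abs_self _
      _ ≤ max |f a| |f b| := le_max_right _ _

/-- Second-order descending stochastic dominance of `X` over `Y` implies that every
risk-seeking investor (nondecreasing convex utility `u`) attains higher expected
utility from `X` than from `Y`. -/
theorem SDSD_implies_expected_utility_riskSeeking
    {Ω : Type*} [MeasurableSpace Ω] (μ ν : Measure Ω)
    [IsProbabilityMeasure μ] [IsProbabilityMeasure ν]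
    (a b : ℝ) (X Y : Ω → ℝ) (hX : Measurable X) (hY : Measurable Y)
    (hXsupp : ∀ᵐ ω ∂μ, X ω ∈ Set.Icc a b) (hYsupp : ∀ᵐ ω ∂ν, Y ω ∈ Set.Icc a b)
    (F G : ℝ → ℝ)
    (hF : ∀ t, F t = (μ {ω | X ω ≤ t}).toReal)
    (hG : ∀ t, G t = (ν {ω | Y ω ≤ t}).toReal)
    (hdom : ∀ x ∈ Set.Icc a b, (∫ t in x..b, (1 - G t)) ≤ ∫ t in x..b, (1 - F t)) :
    ∀ u : ℝ → ℝ, Monotone u → ConvexOn ℝ Set.univ u →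
      (∫ ω, u (Y ω) ∂ν) ≤ ∫ ω, u (X ω) ∂μ := by
  intro u humono huconv
  haveI := MeasureTheory.ae_neBot.2 (MeasureTheory.IsProbabilityMeasure.ne_zero μ)
  obtain ⟨ω₀, hω₀⟩ := hXsupp.exists
  have hab : a ≤ b := hω₀.1.trans hω₀.2
  have hucont : Continuous u := huconv.locallyLipschitz.continuous
  have hfmono : Monotone (rdsd u) := rdsd_mono humono huconv
  have hftc : ∀ c ∈ Set.Icc a b, u c - u a = ∫ t in a..c, rdsd u t :=
    fun c hc => (rdsd_ftc humono huconv hc.1).symm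
  have hXrepr := expect_repr μ X hX hXsupp (rdsd u) hfmono u humono hucont hftc
  have hYrepr := expect_repr ν Y hY hYsupp (rdsd u) hfmono u humono hucont hftc
  set wX : ℝ → ℝ := fun t => (μ {ω | t < X ω}).toReal with hwX
  set wY : ℝ → ℝ := fun t => (ν {ω | t < Y ω}).toReal with hwY
  have hwXanti : Antitone wX := by
    intro t t' htt'
    exact ENNReal.toReal_mono (measure_ne_top μ _)
      (measure_mono (fun ω hω => lt_of_le_of_lt htt' hω))
  have hwYanti : Antitone wY := by
    intro t t' htt'
    exact ENNReal.toReal_mono (measure_ne_top ν _)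
      (measure_mono (fun ω hω => lt_of_le_of_lt htt' hω))
  have hwXb : ∀ t, |wX t| ≤ 1 := by
    intro t
    rw [abs_of_nonneg ENNReal.toReal_nonneg]
    simpa using ENNReal.toReal_mono (by simp) (MeasureTheory.prob_le_one (μ := μ))
  have hwYb : ∀ t, |wY t| ≤ 1 := by
    intro t
    rw [abs_of_nonneg ENNReal.toReal_nonneg]
    simpa using ENNReal.toReal_mono (by simp) (MeasureTheory.prob_le_one (μ := ν))
  have hFX : ∀ t, 1 - F t = wX t := by
    intro t
    rw [hF t, hwX]
    have hcompl : {ω | t < X ω} = {ω | X ω ≤ t}ᶜ := by ext ω; simp [not_le]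
    dsimp only
    have hms : MeasurableSet {ω | X ω ≤ t} := hX measurableSet_Iic
    rw [hcompl, MeasureTheory.prob_compl_eq_one_sub hms,
      ENNReal.toReal_sub_of_le (MeasureTheory.prob_le_one) (by simp), ENNReal.toReal_one]
  have hGY : ∀ t, 1 - G t = wY t := by
    intro t
    rw [hG t, hwY]
    have hcompl : {ω | t < Y ω} = {ω | Y ω ≤ t}ᶜ := by ext ω; simp [not_le]
    dsimp only
    have hms : MeasurableSet {ω | Y ω ≤ t} := hY measurableSet_Iic
    rw [hcompl, MeasureTheory.prob_compl_eq_one_sub hms,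
      ENNReal.toReal_sub_of_le (MeasureTheory.prob_le_one) (by simp), ENNReal.toReal_one]
  -- integrability of wX, wY on subintervals
  have hIX : ∀ x : ℝ, MeasureTheory.IntegrableOn wX (Set.Ico x b) :=
    fun x => bddMeasInt hwXanti.measurable 1 hwXb measurableSet_Ico measure_Ico_lt_top
  have hIY : ∀ x : ℝ, MeasureTheory.IntegrableOn wY (Set.Ico x b) :=
    fun x => bddMeasInt hwYanti.measurable 1 hwYb measurableSet_Ico measure_Ico_lt_top
  -- domination in terms of wX, wY
  have hdom' : ∀ x ∈ Set.Icc a b, 0 ≤ ∫ t in Set.Ico x b, (wX t - wY t) := by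
    intro x hx
    have hsplit : ∫ t in Set.Ico x b, (wX t - wY t)
        = (∫ t in Set.Ico x b, wX t) - ∫ t in Set.Ico x b, wY t :=
      MeasureTheory.integral_sub (hIX x) (hIY x)
    have e1 : ∫ t in Set.Ico x b, wX t = ∫ t in x..b, (1 - F t) := by
      rw [intervalIntegral.integral_of_le hx.2, MeasureTheory.integral_Ioc_eq_integral_Ioo,
        ← MeasureTheory.integral_Ico_eq_integral_Ioo]
      exact MeasureTheory.integral_congr_ae (Filter.Eventually.of_forall
        (fun t => (hFX t).symm))
    have e2 : ∫ t in Set.Ico x b, wY t = ∫ t in x..b, (1 - G t) := by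
      rw [intervalIntegral.integral_of_le hx.2, MeasureTheory.integral_Ioc_eq_integral_Ioo,
        ← MeasureTheory.integral_Ico_eq_integral_Ioo]
      exact MeasureTheory.integral_congr_ae (Filter.Eventually.of_forall
        (fun t => (hGY t).symm))
    rw [hsplit, e1, e2, sub_nonneg]
    exact hdom x hx
  -- positivity of the weighted difference
  have hpos : 0 ≤ ∫ t in Set.Ico a b, rdsd u t * (wX t - wY t) :=
    stepPos (rdsd u) (fun t => wX t - wY t) hfmono (rdsd_nonneg humono a)
      ((hIX a).sub (hIY a)) hdom'
  -- products integrable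
  have hPX : MeasureTheory.IntegrableOn (fun t => rdsd u t * wX t) (Set.Ico a b) :=
    intOn_mul measurableSet_Ico (hIX a) hfmono.measurable _
      (fun t ht => mono_abs_bd hfmono ht.1 ht.2.le)
  have hPY : MeasureTheory.IntegrableOn (fun t => rdsd u t * wY t) (Set.Ico a b) :=
    intOn_mul measurableSet_Ico (hIY a) hfmono.measurable _
      (fun t ht => mono_abs_bd hfmono ht.1 ht.2.le)
  have hdiff : (∫ t in Set.Ico a b, rdsd u t * wX t) - (∫ t in Set.Ico a b, rdsd u t * wY t)
      = ∫ t in Set.Ico a b, rdsd u t * (wX t - wY t) := by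
    rw [← MeasureTheory.integral_sub hPX hPY]
    exact MeasureTheory.integral_congr_ae (Filter.Eventually.of_forall (fun t => by ring))
  rw [hXrepr, hYrepr]
  linarith [hpos, hdiff]
end
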